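/- arXiv:1203.2685 — 8 statements merged into one kernel-verified Lean document; each statement's English description precedes it below -/
import Mathlib

section
/- For natural numbers n, m > 1 with at least one of n, m odd, the subgroup of (ℤ/2nm)⁴ generated by r₁ = (nm−n−m, nm+n−m, nm+n+m, nm−n+m) and r₂ = (nm+n−m, nm−n−m, nm−n+m, nm+n+m) contains the vectors (m, m, −m, −m) and (n, −n, −n, n). -/
/-- First row of the matrix defining `S(n,m)`, as a vector in `(ℤ/2nm)⁴`. -/
def row1 (n m : ℕ) : Fin 4 → ZMod (2*n*m) :=
  ![(((n:ℤ)*m - n - m : ℤ) : ZMod (2*n*m)), (((n:ℤ)*m + n - m : ℤ) : ZMod (2*n*m)),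
    (((n:ℤ)*m + n + m : ℤ) : ZMod (2*n*m)), (((n:ℤ)*m - n + m : ℤ) : ZMod (2*n*m))]

/-- Second row of the matrix defining `S(n,m)`. -/
def row2 (n m : ℕ) : Fin 4 → ZMod (2*n*m) :=
  ![(((n:ℤ)*m + n - m : ℤ) : ZMod (2*n*m)), (((n:ℤ)*m - n - m : ℤ) : ZMod (2*n*m)),
    (((n:ℤ)*m - n + m : ℤ) : ZMod (2*n*m)), (((n:ℤ)*m + n + m : ℤ) : ZMod (2*n*m))]

/-- The row span of `S(n,m)`: the additive subgroup of `(ℤ/2nm)⁴` generated by the two rows. -/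
def rowSpan (n m : ℕ) : AddSubgroup (Fin 4 → ZMod (2*n*m)) :=
  AddSubgroup.closure {row1 n m, row2 n m}

lemma castEq (N : ℕ) (x y c : ℤ) (h : x - y = N * c) :
    ((x : ℤ) : ZMod N) = ((y : ℤ) : ZMod N) := by
  have h2 : (((x - y : ℤ)) : ZMod N) = 0 :=
    (ZMod.intCast_zmod_eq_zero_iff_dvd _ N).mpr ⟨c, h⟩
  rwa [Int.cast_sub, sub_eq_zero] at h2

lemma coordEq (N : ℕ) (a b x y t c : ℤ) (h : t - (a*x + b*y) = N * c) :
    ((t:ℤ) : ZMod N) = a • ((x:ℤ):ZMod N) + b • ((y:ℤ):ZMod N) := by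
  rw [zsmul_eq_mul, zsmul_eq_mul, ← Int.cast_mul, ← Int.cast_mul, ← Int.cast_add]
  exact castEq N t _ c h

lemma comb_mem (n m : ℕ) (a b : ℤ) : a • row1 n m + b • row2 n m ∈ rowSpan n m := by
  have h1 : row1 n m ∈ rowSpan n m := AddSubgroup.subset_closure (by left; rfl)
  have h2 : row2 n m ∈ rowSpan n m := AddSubgroup.subset_closure (by right; rfl)
  exact add_mem (zsmul_mem h1 a) (zsmul_mem h2 b)

lemma mem_of_combo (n m : ℕ) (a b : ℤ) (v : Fin 4 → ZMod (2*n*m))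
    (h : v = a • row1 n m + b • row2 n m) : v ∈ rowSpan n m := h ▸ comb_mem n m a b

/-- if `n` or `m` is odd, the row span of `S(n,m)` contains
`(m, m, −m, −m)` and `(n, −n, −n, n)`. -/
theorem stmt_2 (n m : ℕ) (hn : 1 < n) (hm : 1 < m) (hodd : Odd n ∨ Odd m) :
    ![(((m:ℤ) : ℤ) : ZMod (2*n*m)), (((m:ℤ) : ℤ) : ZMod (2*n*m)),
        ((-(m:ℤ) : ℤ) : ZMod (2*n*m)), ((-(m:ℤ) : ℤ) : ZMod (2*n*m))] ∈ rowSpan n m ∧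
    ![(((n:ℤ) : ℤ) : ZMod (2*n*m)), ((-(n:ℤ) : ℤ) : ZMod (2*n*m)),
        ((-(n:ℤ) : ℤ) : ZMod (2*n*m)), (((n:ℤ) : ℤ) : ZMod (2*n*m))] ∈ rowSpan n m := by
  rcases Nat.even_or_odd m with hme | hmo
  · -- m even, hence n odd
    have hno : Odd n := hodd.resolve_right (Nat.not_odd_iff_even.mpr hme)
    obtain ⟨k, hk⟩ := hno
    obtain ⟨l, hl⟩ := hme
    subst hk hl
    constructor
    · apply mem_of_combo _ _ ((k:ℤ) + l*(2*k-1)) ((k:ℤ) - l*(2*k-1))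
      funext i
      fin_cases i <;>
        simp only [row1, row2, Pi.add_apply, Pi.smul_apply, Matrix.cons_val_zero,
          Matrix.cons_val_one, Matrix.head_cons, Matrix.cons_val_two, Matrix.tail_cons,
          Matrix.cons_val_three, Matrix.cons_val_fin_one, Fin.isValue]
      · exact coordEq _ _ _ _ _ _ 0 (by push_cast; ring)
      · exact coordEq _ _ _ _ _ _ (-(2*(k:ℤ)-1)) (by push_cast; ring)
      · exact coordEq _ _ _ _ _ _ (-(2*(k:ℤ))) (by push_cast; ring)
      · exact coordEq _ _ _ _ _ _ (-1) (by push_cast; ring)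
    · apply mem_of_combo _ _ ((k:ℤ) + 2*k*l) ((k:ℤ) + 1 - 2*k*l)
      funext i
      fin_cases i <;>
        simp only [row1, row2, Pi.add_apply, Pi.smul_apply, Matrix.cons_val_zero,
          Matrix.cons_val_one, Matrix.head_cons, Matrix.cons_val_two, Matrix.tail_cons,
          Matrix.cons_val_three, Matrix.cons_val_fin_one, Fin.isValue]
      · exact coordEq _ _ _ _ _ _ 0 (by push_cast; ring)
      · exact coordEq _ _ _ _ _ _ (-(2*(k:ℤ))) (by push_cast; ring)
      · exact coordEq _ _ _ _ _ _ (-(2*(k:ℤ)+1)) (by push_cast; ring)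
      · exact coordEq _ _ _ _ _ _ (-1) (by push_cast; ring)
  · -- m odd
    obtain ⟨l, hl⟩ := hmo
    subst hl
    constructor
    · apply mem_of_combo _ _ ((2*(n:ℤ)-1)*((l:ℤ)+1)) (-((2*(n:ℤ)-1)*l))
      funext i
      fin_cases i <;>
        simp only [row1, row2, Pi.add_apply, Pi.smul_apply, Matrix.cons_val_zero,
          Matrix.cons_val_one, Matrix.head_cons, Matrix.cons_val_two, Matrix.tail_cons,
          Matrix.cons_val_three, Matrix.cons_val_fin_one, Fin.isValue]
      · exact coordEq _ _ _ _ _ _ 1 (by push_cast; ring)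
      · exact coordEq _ _ _ _ _ _ (2 - 2*(n:ℤ)) (by push_cast; ring)
      · exact coordEq _ _ _ _ _ _ (-(2*(n:ℤ))) (by push_cast; ring)
      · exact coordEq _ _ _ _ _ _ (-1) (by push_cast; ring)
    · apply mem_of_combo _ _ (((n:ℤ)-1)*((l:ℤ)+1)) (1 - (l:ℤ)*((n:ℤ)-1))
      funext i
      fin_cases i <;>
        simp only [row1, row2, Pi.add_apply, Pi.smul_apply, Matrix.cons_val_zero,
          Matrix.cons_val_one, Matrix.head_cons, Matrix.cons_val_two, Matrix.tail_cons,
          Matrix.cons_val_three, Matrix.cons_val_fin_one, Fin.isValue]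
      · exact coordEq _ _ _ _ _ _ 0 (by push_cast; ring)
      · exact coordEq _ _ _ _ _ _ (1 - (n:ℤ)) (by push_cast; ring)
      · exact coordEq _ _ _ _ _ _ (-(n:ℤ)) (by push_cast; ring)
      · exact coordEq _ _ _ _ _ _ (-1) (by push_cast; ring)
end

section
/- Let n, m > 1 and suppose n' divides n, m' divides m, with n = l·n' and m = k·m'. If n or m is odd, or if n and m are both even and k + l is even (equivalently n/n' + m/m' is even), then both row vectors of the matrix with rows (nm−kn−lm, nm+kn−lm, nm+kn+lm, nm−kn+lm) and (nm+kn−lm, nm−kn−lm, nm−kn+lm, nm+kn+lm), with entries taken modulo 2nm, lie in the subgroup of (ℤ/2nm)⁴ generated by (nm−n−m, nm+n−m, nm+n+m, nm−n+m) and (nm+n−m, nm−n−m, nm−n+m, nm+n+m). -/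
lemma key (n m : ℕ) (k l u v : ℤ)
    (h1 : Even (l + (n:ℤ)*v + u + v + 1))
    (h2 : Even (l + (n:ℤ)*v + k + (m:ℤ)*u)) :
    ![(((n:ℤ)*m - k*n - l*m : ℤ) : ZMod (2*n*m)), (((n:ℤ)*m + k*n - l*m : ℤ) : ZMod (2*n*m)),
        (((n:ℤ)*m + k*n + l*m : ℤ) : ZMod (2*n*m)), (((n:ℤ)*m - k*n + l*m : ℤ) : ZMod (2*n*m))]
      ∈ rowSpan n m ∧
    ![(((n:ℤ)*m + k*n - l*m : ℤ) : ZMod (2*n*m)), (((n:ℤ)*m - k*n - l*m : ℤ) : ZMod (2*n*m)),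
        (((n:ℤ)*m - k*n + l*m : ℤ) : ZMod (2*n*m)), (((n:ℤ)*m + k*n + l*m : ℤ) : ZMod (2*n*m))]
      ∈ rowSpan n m := by
  obtain ⟨t, ht⟩ := h1
  obtain ⟨r, hr⟩ := h2
  have htZ : ((l + (n:ℤ)*v + u + v + 1 : ℤ) : ZMod (2*n*m)) = ((t + t : ℤ) : ZMod (2*n*m)) := by
    rw [ht]
  have hrZ : ((l + (n:ℤ)*v + k + (m:ℤ)*u : ℤ) : ZMod (2*n*m)) = ((r + r : ℤ) : ZMod (2*n*m)) := by
    rw [hr]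
  push_cast at htZ hrZ
  have hN : ((2*n*m : ℕ) : ZMod (2*n*m)) = 0 := ZMod.natCast_self _
  push_cast at hN
  have hmem1 : row1 n m ∈ rowSpan n m := AddSubgroup.subset_closure (Set.mem_insert _ _)
  have hmem2 : row2 n m ∈ rowSpan n m := AddSubgroup.subset_closure (Set.mem_insert_of_mem _ rfl)
  have e0 : (((n:ℤ)*m - k*n - l*m : ℤ) : ZMod (2*n*m))
      = r • (((n:ℤ)*m - n - m : ℤ) : ZMod (2*n*m))
        + (l + (n:ℤ)*v - r) • (((n:ℤ)*m + n - m : ℤ) : ZMod (2*n*m)) := by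
    simp only [zsmul_eq_mul]; push_cast
    linear_combination (-(n:ZMod (2*n*m)))*hrZ + (-(n:ZMod (2*n*m))*m)*htZ
      + (-((t:ZMod (2*n*m))-u-v-1))*hN
  have e1 : (((n:ℤ)*m + k*n - l*m : ℤ) : ZMod (2*n*m))
      = r • (((n:ℤ)*m + n - m : ℤ) : ZMod (2*n*m))
        + (l + (n:ℤ)*v - r) • (((n:ℤ)*m - n - m : ℤ) : ZMod (2*n*m)) := by
    simp only [zsmul_eq_mul]; push_cast
    linear_combination ((n:ZMod (2*n*m)))*hrZ + (-(n:ZMod (2*n*m))*m)*htZ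
      + (-((t:ZMod (2*n*m))-v-1))*hN
  have e2 : (((n:ℤ)*m + k*n + l*m : ℤ) : ZMod (2*n*m))
      = r • (((n:ℤ)*m + n + m : ℤ) : ZMod (2*n*m))
        + (l + (n:ℤ)*v - r) • (((n:ℤ)*m - n + m : ℤ) : ZMod (2*n*m)) := by
    simp only [zsmul_eq_mul]; push_cast
    linear_combination ((n:ZMod (2*n*m)))*hrZ + (-(n:ZMod (2*n*m))*m)*htZ
      + (-((t:ZMod (2*n*m))-1))*hN
  have e3 : (((n:ℤ)*m - k*n + l*m : ℤ) : ZMod (2*n*m))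
      = r • (((n:ℤ)*m - n + m : ℤ) : ZMod (2*n*m))
        + (l + (n:ℤ)*v - r) • (((n:ℤ)*m + n + m : ℤ) : ZMod (2*n*m)) := by
    simp only [zsmul_eq_mul]; push_cast
    linear_combination (-(n:ZMod (2*n*m)))*hrZ + (-(n:ZMod (2*n*m))*m)*htZ
      + (-((t:ZMod (2*n*m))-u-1))*hN
  have f0 : (((n:ℤ)*m + k*n - l*m : ℤ) : ZMod (2*n*m))
      = (l + (n:ℤ)*v - r) • (((n:ℤ)*m - n - m : ℤ) : ZMod (2*n*m))
        + r • (((n:ℤ)*m + n - m : ℤ) : ZMod (2*n*m)) := by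
    simp only [zsmul_eq_mul]; push_cast
    linear_combination ((n:ZMod (2*n*m)))*hrZ + (-(n:ZMod (2*n*m))*m)*htZ
      + (-((t:ZMod (2*n*m))-v-1))*hN
  have f1 : (((n:ℤ)*m - k*n - l*m : ℤ) : ZMod (2*n*m))
      = (l + (n:ℤ)*v - r) • (((n:ℤ)*m + n - m : ℤ) : ZMod (2*n*m))
        + r • (((n:ℤ)*m - n - m : ℤ) : ZMod (2*n*m)) := by
    simp only [zsmul_eq_mul]; push_cast
    linear_combination (-(n:ZMod (2*n*m)))*hrZ + (-(n:ZMod (2*n*m))*m)*htZ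
      + (-((t:ZMod (2*n*m))-u-v-1))*hN
  have f2 : (((n:ℤ)*m - k*n + l*m : ℤ) : ZMod (2*n*m))
      = (l + (n:ℤ)*v - r) • (((n:ℤ)*m + n + m : ℤ) : ZMod (2*n*m))
        + r • (((n:ℤ)*m - n + m : ℤ) : ZMod (2*n*m)) := by
    simp only [zsmul_eq_mul]; push_cast
    linear_combination (-(n:ZMod (2*n*m)))*hrZ + (-(n:ZMod (2*n*m))*m)*htZ
      + (-((t:ZMod (2*n*m))-u-1))*hN
  have f3 : (((n:ℤ)*m + k*n + l*m : ℤ) : ZMod (2*n*m))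
      = (l + (n:ℤ)*v - r) • (((n:ℤ)*m - n + m : ℤ) : ZMod (2*n*m))
        + r • (((n:ℤ)*m + n + m : ℤ) : ZMod (2*n*m)) := by
    simp only [zsmul_eq_mul]; push_cast
    linear_combination ((n:ZMod (2*n*m)))*hrZ + (-(n:ZMod (2*n*m))*m)*htZ
      + (-((t:ZMod (2*n*m))-1))*hN
  constructor
  · have heq : ![(((n:ℤ)*m - k*n - l*m : ℤ) : ZMod (2*n*m)), (((n:ℤ)*m + k*n - l*m : ℤ) : ZMod (2*n*m)),
        (((n:ℤ)*m + k*n + l*m : ℤ) : ZMod (2*n*m)), (((n:ℤ)*m - k*n + l*m : ℤ) : ZMod (2*n*m))]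
        = r • row1 n m + (l + (n:ℤ)*v - r) • row2 n m := by
      funext i
      fin_cases i
      · exact e0
      · exact e1
      · exact e2
      · exact e3
    rw [heq]
    exact add_mem (zsmul_mem hmem1 r) (zsmul_mem hmem2 _)
  · have heq : ![(((n:ℤ)*m + k*n - l*m : ℤ) : ZMod (2*n*m)), (((n:ℤ)*m - k*n - l*m : ℤ) : ZMod (2*n*m)),
        (((n:ℤ)*m - k*n + l*m : ℤ) : ZMod (2*n*m)), (((n:ℤ)*m + k*n + l*m : ℤ) : ZMod (2*n*m))]
        = (l + (n:ℤ)*v - r) • row1 n m + r • row2 n m := by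
      funext i
      fin_cases i
      · exact f0
      · exact f1
      · exact f2
      · exact f3
    rw [heq]
    exact add_mem (zsmul_mem hmem1 _) (zsmul_mem hmem2 r)

/-- if `n = l·n'`, `m = k·m'`, and either `n` or `m` is odd, or both are even
and `k + l` is even, then both rows of the matrix with entries
`(nm∓kn∓lm, …)` lie in the row span of `S(n,m)`. -/
theorem stmt_4 (n m n' m' k l : ℕ) (hn : 1 < n) (hm : 1 < m)
    (hn' : n = l * n') (hm' : m = k * m')
    (hpar : (Odd n ∨ Odd m) ∨ (Even n ∧ Even m ∧ Even (k + l))) :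
    ![(((n:ℤ)*m - k*n - l*m : ℤ) : ZMod (2*n*m)), (((n:ℤ)*m + k*n - l*m : ℤ) : ZMod (2*n*m)),
        (((n:ℤ)*m + k*n + l*m : ℤ) : ZMod (2*n*m)), (((n:ℤ)*m - k*n + l*m : ℤ) : ZMod (2*n*m))]
      ∈ rowSpan n m ∧
    ![(((n:ℤ)*m + k*n - l*m : ℤ) : ZMod (2*n*m)), (((n:ℤ)*m - k*n - l*m : ℤ) : ZMod (2*n*m)),
        (((n:ℤ)*m - k*n + l*m : ℤ) : ZMod (2*n*m)), (((n:ℤ)*m + k*n + l*m : ℤ) : ZMod (2*n*m))]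
      ∈ rowSpan n m := by
  rcases hpar with (⟨p, hp⟩ | ⟨q, hq⟩) | ⟨⟨p, hp⟩, ⟨q, hq⟩, ⟨c, hc⟩⟩
  · -- n odd : n = 2p+1
    have hpZ : (n : ℤ) = 2*p + 1 := by exact_mod_cast hp
    exact key n m k l ((l:ℤ)+1) ((l:ℤ) + k + m*((l:ℤ)+1))
      ⟨(l:ℤ) + 1 + ((p:ℤ)+1)*((l:ℤ) + k + m*((l:ℤ)+1)), by rw [hpZ]; ring⟩
      ⟨((p:ℤ)+1)*((l:ℤ) + k + m*((l:ℤ)+1)), by rw [hpZ]; ring⟩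
  · -- m odd : m = 2q+1
    have hqZ : (m : ℤ) = 2*q + 1 := by exact_mod_cast hq
    exact key n m k l ((l:ℤ) + n*(1+(k:ℤ)) + k) (1 + (k:ℤ))
      ⟨(l:ℤ) + n*(1+(k:ℤ)) + k + 1, by ring⟩
      ⟨((q:ℤ)+1)*((l:ℤ) + n*(1+(k:ℤ)) + k), by rw [hqZ]; ring⟩
  · -- n, m even, k+l even
    have hqZ : (m : ℤ) = q + q := by exact_mod_cast hq
    have hcZ : (k : ℤ) + l = c + c := by exact_mod_cast hc
    exact key n m k l ((l:ℤ)+1) 0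
      ⟨(l:ℤ) + 1, by ring⟩
      ⟨(c:ℤ) + q*((l:ℤ)+1), by rw [hqZ]; linear_combination hcZ⟩
end

section
/- Let n, m > 1 with nm ≥ 6, and let N = 2nm. For r = (r₁, r₂, r₃, r₄) in the subgroup of (ℤ/N)⁴ generated by (nm−n−m, nm+n−m, nm+n+m, nm−n+m) and (nm+n−m, nm−n−m, nm−n+m, nm+n+m), define t_j(r) = {r_j/N} (fractional part of any integer representative divided by N) and t(r) = t₁(r)+t₂(r)+t₃(r)+t₄(r). If all four entries r_j are nonzero in ℤ/N, then t₁(r)+t₃(r) = 1 and t₂(r)+t₄(r) = 1, and hence t(r) = 2 and t(−r) = 2. -/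
/-- `t(x) = {r/N}`: the fractional part of (an integer representative of) `x` divided by `N`. -/
def tfrac {N : ℕ} (x : ZMod N) : ℚ := (x.val : ℚ) / N

lemma tfrac_add_neg {N : ℕ} [NeZero N] (x : ZMod N) (hx : x ≠ 0) :
    tfrac x + tfrac (-x) = 1 := by
  haveI : NeZero x := ⟨hx⟩
  unfold tfrac
  rw [ZMod.val_neg_of_ne_zero]
  have h1 : x.val ≤ N := le_of_lt (ZMod.val_lt x)
  have hN : (N : ℚ) ≠ 0 := Nat.cast_ne_zero.mpr (NeZero.ne N)
  rw [← add_div, ← Nat.cast_add, Nat.add_sub_cancel' h1, div_self hN]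

lemma span_sum (n m : ℕ) (r : Fin 4 → ZMod (2*n*m)) (hr : r ∈ rowSpan n m) :
    r 0 + r 2 = 0 ∧ r 1 + r 3 = 0 := by
  have key : ((((n:ℤ)*m - n - m : ℤ) : ZMod (2*n*m)) + (((n:ℤ)*m + n + m : ℤ) : ZMod (2*n*m)) = 0) := by
    rw [← Int.cast_add]
    have h : ((n:ℤ)*m - n - m) + ((n:ℤ)*m + n + m) = ((2*n*m : ℕ) : ℤ) := by push_cast; ring
    rw [h, Int.cast_natCast, ZMod.natCast_self]
  have key2 : ((((n:ℤ)*m + n - m : ℤ) : ZMod (2*n*m)) + (((n:ℤ)*m - n + m : ℤ) : ZMod (2*n*m)) = 0) := by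
    rw [← Int.cast_add]
    have h : ((n:ℤ)*m + n - m) + ((n:ℤ)*m - n + m) = ((2*n*m : ℕ) : ℤ) := by push_cast; ring
    rw [h, Int.cast_natCast, ZMod.natCast_self]
  induction hr using AddSubgroup.closure_induction with
  | mem x hx =>
    rcases hx with h | h <;> subst h
    · exact ⟨key, key2⟩
    · exact ⟨key2, key⟩
  | zero => simp
  | add x y _ _ hx hy =>
    refine ⟨?_, ?_⟩ <;> simp only [Pi.add_apply]
    · linear_combination hx.1 + hy.1
    · linear_combination hx.2 + hy.2
  | neg x _ hx =>
    refine ⟨?_, ?_⟩ <;> simp only [Pi.neg_apply]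
    · linear_combination -hx.1
    · linear_combination -hx.2

/-- for `r` in the row span of `S(n,m)` with all entries nonzero,
`t₁+t₃ = 1`, `t₂+t₄ = 1`, hence `t(r) = 2` and `t(−r) = 2`. -/
theorem stmt_6 (n m : ℕ) (hn : 1 < n) (hm : 1 < m) (h6 : 6 ≤ n * m)
    (r : Fin 4 → ZMod (2*n*m)) (hr : r ∈ rowSpan n m) (hnz : ∀ j, r j ≠ 0) :
    (tfrac (r 0) + tfrac (r 2) = 1 ∧ tfrac (r 1) + tfrac (r 3) = 1) ∧
    tfrac (r 0) + tfrac (r 1) + tfrac (r 2) + tfrac (r 3) = 2 ∧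
    tfrac (-r 0) + tfrac (-r 1) + tfrac (-r 2) + tfrac (-r 3) = 2 := by
  haveI : NeZero (2*n*m) := ⟨by positivity⟩
  obtain ⟨h02, h13⟩ := span_sum n m r hr
  have e2 : r 2 = -(r 0) := by linear_combination h02
  have e3 : r 3 = -(r 1) := by linear_combination h13
  have t02 : tfrac (r 0) + tfrac (r 2) = 1 := by
    rw [e2]; exact tfrac_add_neg _ (hnz 0)
  have t13 : tfrac (r 1) + tfrac (r 3) = 1 := by
    rw [e3]; exact tfrac_add_neg _ (hnz 1)
  have t02' : tfrac (-r 0) + tfrac (-r 2) = 1 := by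
    rw [e2, neg_neg, add_comm]; exact tfrac_add_neg _ (hnz 0)
  have t13' : tfrac (-r 1) + tfrac (-r 3) = 1 := by
    rw [e3, neg_neg, add_comm]; exact tfrac_add_neg _ (hnz 1)
  exact ⟨⟨t02, t13⟩, by linarith, by linarith⟩
end

section
/- Let n, m > 1 with nm ≥ 6 and N = 2nm. If r = (r₁, r₂, r₃, r₄) lies in the subgroup of (ℤ/N)⁴ generated by (nm−n−m, nm+n−m, nm+n+m, nm−n+m) and (nm+n−m, nm−n−m, nm−n+m, nm+n+m), and r satisfies r₁ = r₃ and r₂ = r₄ in ℤ/N with all entries nonzero, then r₁ = r₂ = r₃ = r₄ = nm in ℤ/N. -/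
/-- if `r` is in the row span of `S(n,m)` with `r₁ = r₃`, `r₂ = r₄` and all
entries nonzero, then all entries equal `nm` in `ℤ/2nm`. -/
theorem stmt_7 (n m : ℕ) (hn : 1 < n) (hm : 1 < m) (h6 : 6 ≤ n * m)
    (r : Fin 4 → ZMod (2*n*m)) (hr : r ∈ rowSpan n m)
    (h13 : r 0 = r 2) (h24 : r 1 = r 3) (hnz : ∀ j, r j ≠ 0) :
    ∀ j, r j = ((n * m : ℕ) : ZMod (2*n*m)) := by
  have hnm : 0 < n * m := by positivity
  haveI : NeZero (2*n*m) := ⟨by positivity⟩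
  -- every element of the row span satisfies r 0 + r 2 = 0 and r 1 + r 3 = 0
  have key : ∀ s ∈ rowSpan n m, s 0 + s 2 = 0 ∧ s 1 + s 3 = 0 := by
    intro s hs
    have hN : ((2*n*m : ℤ) : ZMod (2*n*m)) = 0 := by
      exact_mod_cast ZMod.natCast_self (2*n*m)
    refine AddSubgroup.closure_induction ?_ ?_ ?_ ?_ hs
    · rintro x (rfl | rfl) <;> constructor <;>
        · simp only [row1, row2, Matrix.cons_val_zero, Matrix.cons_val_one, Matrix.head_cons,
            Matrix.cons_val_two, Matrix.tail_cons, Matrix.cons_val_three]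
          rw [← Int.cast_add, ZMod.intCast_zmod_eq_zero_iff_dvd]
          exact ⟨1, by push_cast; ring⟩
    · simp
    · intro a b _ _ ha hb
      constructor
      · have := ha.1; have := hb.1
        simp only [Pi.add_apply]
        linear_combination ha.1 + hb.1
      · simp only [Pi.add_apply]
        linear_combination ha.2 + hb.2
    · intro a _ ha
      constructor
      · simp only [Pi.neg_apply]
        linear_combination -ha.1
      · simp only [Pi.neg_apply]
        linear_combination -ha.2
  obtain ⟨h02, h13'⟩ := key r hr
  -- if x + x = 0 and x ≠ 0 then x = n*m
  have half : ∀ x : ZMod (2*n*m), x + x = 0 → x ≠ 0 → x = ((n*m : ℕ) : ZMod (2*n*m)) := by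
    intro x hx hx0
    have hv : ((x.val + x.val : ℕ) : ZMod (2*n*m)) = 0 := by
      push_cast [ZMod.natCast_val, ZMod.cast_id]
      exact hx
    rw [ZMod.natCast_eq_zero_iff] at hv
    have hlt : x.val < 2*n*m := ZMod.val_lt x
    have hdvd : n*m ∣ x.val := by
      obtain ⟨k, hk⟩ := hv
      refine ⟨k, ?_⟩
      have h2 : 2*(n*m*k) = 2*n*m*k := by ring
      omega
    have hne : x.val ≠ 0 := fun h => hx0 ((ZMod.val_eq_zero x).mp h)
    have : x.val = n*m := by
      obtain ⟨k, hk⟩ := hdvd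
      have hk2 : k < 2 := by
        have e : n*m*2 = 2*n*m := by ring
        have h1 : n*m*k < n*m*2 := by omega
        exact Nat.lt_of_mul_lt_mul_left h1
      have hk1 : k ≠ 0 := by rintro rfl; simp at hk; exact hx0 hk
      have : k = 1 := by omega
      subst this; rw [mul_one] at hk; exact hk
    calc x = ((x.val : ℕ) : ZMod (2*n*m)) := by
            rw [ZMod.natCast_val, ZMod.cast_id]
      _ = ((n*m : ℕ) : ZMod (2*n*m)) := by rw [this]
  have e0 : r 0 = ((n*m : ℕ) : ZMod (2*n*m)) := by
    apply half _ _ (hnz 0)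
    linear_combination h02 + h13
  have e1 : r 1 = ((n*m : ℕ) : ZMod (2*n*m)) := by
    apply half _ _ (hnz 1)
    linear_combination h13' + h24
  intro j
  fin_cases j
  · exact e0
  · exact e1
  · exact h13.symm.trans e0
  · exact h24.symm.trans e1
end

section
/- If either n or m is odd (n, m > 1), then the subgroup of (ℤ/2nm)² generated by the columns vectors (−m, −m) and (−n, n) equals the subgroup generated by the four column vectors (nm−n−m, nm+n−m), (nm+n−m, nm−n−m), (nm+n+m, nm−n+m), (nm−n+m, nm+n+m), i.e., the column span of the matrix defining S(n,m). -/
lemma zmod_int_eq {N : ℕ} {x y : ℤ} (h : (N:ℤ) ∣ y - x) : ((x : ZMod N) = (y : ZMod N)) :=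
  (ZMod.intCast_eq_intCast_iff _ _ _).mpr (Int.modEq_iff_dvd.mpr h)

lemma vec_eq {N : ℕ} (p q x1 x2 y1 y2 z1 z2 : ℤ)
    (h1 : (N:ℤ) ∣ p * x1 + q * y1 - z1) (h2 : (N:ℤ) ∣ p * x2 + q * y2 - z2) :
    (![(z1 : ZMod N), (z2 : ZMod N)]) =
      p • (![(x1 : ZMod N), (x2 : ZMod N)]) + q • (![(y1 : ZMod N), (y2 : ZMod N)]) := by
  funext i
  fin_cases i
  · show (z1 : ZMod N) = p • (x1 : ZMod N) + q • (y1 : ZMod N)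
    rw [zsmul_eq_mul, zsmul_eq_mul]
    exact (zmod_int_eq h1).trans (by push_cast; ring)
  · show (z2 : ZMod N) = p • (x2 : ZMod N) + q • (y2 : ZMod N)
    rw [zsmul_eq_mul, zsmul_eq_mul]
    exact (zmod_int_eq h2).trans (by push_cast; ring)

lemma combo_mem {N : ℕ} (S : Set (Fin 2 → ZMod N)) {x y : Fin 2 → ZMod N}
    (hx : x ∈ S) (hy : y ∈ S) (p q : ℤ) :
    p • x + q • y ∈ AddSubgroup.closure S :=
  add_mem (AddSubgroup.zsmul_mem _ (AddSubgroup.subset_closure hx) p)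
    (AddSubgroup.zsmul_mem _ (AddSubgroup.subset_closure hy) q)

/-- The column span of the matrix defining `S(n,m)`: the additive subgroup of `(ℤ/2nm)²`
generated by the four columns. -/
def colSpan (n m : ℕ) : AddSubgroup (Fin 2 → ZMod (2*n*m)) :=
  AddSubgroup.closure
    {![(((n:ℤ)*m - n - m : ℤ) : ZMod (2*n*m)), (((n:ℤ)*m + n - m : ℤ) : ZMod (2*n*m))],
     ![(((n:ℤ)*m + n - m : ℤ) : ZMod (2*n*m)), (((n:ℤ)*m - n - m : ℤ) : ZMod (2*n*m))],
     ![(((n:ℤ)*m + n + m : ℤ) : ZMod (2*n*m)), (((n:ℤ)*m - n + m : ℤ) : ZMod (2*n*m))],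
     ![(((n:ℤ)*m - n + m : ℤ) : ZMod (2*n*m)), (((n:ℤ)*m + n + m : ℤ) : ZMod (2*n*m))]}

/-- if `n` or `m` is odd, the subgroup of `(ℤ/2nm)²` generated by
`(−m,−m)` and `(−n,n)` equals the column span of `S(n,m)`. -/
theorem stmt_8 (n m : ℕ) (hn : 1 < n) (hm : 1 < m) (hodd : Odd n ∨ Odd m) :
    AddSubgroup.closure
      ({![((-(m:ℤ) : ℤ) : ZMod (2*n*m)), ((-(m:ℤ) : ℤ) : ZMod (2*n*m))],
        ![((-(n:ℤ) : ℤ) : ZMod (2*n*m)), (((n:ℤ) : ℤ) : ZMod (2*n*m))]} :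
        Set (Fin 2 → ZMod (2*n*m)))
      = colSpan n m := by
  have hc1 : (![(((n:ℤ)*m - n - m : ℤ) : ZMod (2*n*m)), (((n:ℤ)*m + n - m : ℤ) : ZMod (2*n*m))])
      ∈ ({![(((n:ℤ)*m - n - m : ℤ) : ZMod (2*n*m)), (((n:ℤ)*m + n - m : ℤ) : ZMod (2*n*m))],
     ![(((n:ℤ)*m + n - m : ℤ) : ZMod (2*n*m)), (((n:ℤ)*m - n - m : ℤ) : ZMod (2*n*m))],
     ![(((n:ℤ)*m + n + m : ℤ) : ZMod (2*n*m)), (((n:ℤ)*m - n + m : ℤ) : ZMod (2*n*m))],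
     ![(((n:ℤ)*m - n + m : ℤ) : ZMod (2*n*m)), (((n:ℤ)*m + n + m : ℤ) : ZMod (2*n*m))]} :
        Set (Fin 2 → ZMod (2*n*m))) := by left; rfl
  have hc2 : (![(((n:ℤ)*m + n - m : ℤ) : ZMod (2*n*m)), (((n:ℤ)*m - n - m : ℤ) : ZMod (2*n*m))])
      ∈ ({![(((n:ℤ)*m - n - m : ℤ) : ZMod (2*n*m)), (((n:ℤ)*m + n - m : ℤ) : ZMod (2*n*m))],
     ![(((n:ℤ)*m + n - m : ℤ) : ZMod (2*n*m)), (((n:ℤ)*m - n - m : ℤ) : ZMod (2*n*m))],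
     ![(((n:ℤ)*m + n + m : ℤ) : ZMod (2*n*m)), (((n:ℤ)*m - n + m : ℤ) : ZMod (2*n*m))],
     ![(((n:ℤ)*m - n + m : ℤ) : ZMod (2*n*m)), (((n:ℤ)*m + n + m : ℤ) : ZMod (2*n*m))]} :
        Set (Fin 2 → ZMod (2*n*m))) := by right; left; rfl
  have ha : (![((-(m:ℤ) : ℤ) : ZMod (2*n*m)), ((-(m:ℤ) : ℤ) : ZMod (2*n*m))])
      ∈ ({![((-(m:ℤ) : ℤ) : ZMod (2*n*m)), ((-(m:ℤ) : ℤ) : ZMod (2*n*m))],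
        ![((-(n:ℤ) : ℤ) : ZMod (2*n*m)), (((n:ℤ) : ℤ) : ZMod (2*n*m))]} :
        Set (Fin 2 → ZMod (2*n*m))) := by left; rfl
  have hb : (![((-(n:ℤ) : ℤ) : ZMod (2*n*m)), (((n:ℤ) : ℤ) : ZMod (2*n*m))])
      ∈ ({![((-(m:ℤ) : ℤ) : ZMod (2*n*m)), ((-(m:ℤ) : ℤ) : ZMod (2*n*m))],
        ![((-(n:ℤ) : ℤ) : ZMod (2*n*m)), (((n:ℤ) : ℤ) : ZMod (2*n*m))]} :
        Set (Fin 2 → ZMod (2*n*m))) := by right; rfl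
  apply le_antisymm
  · -- {a, b} ⊆ colSpan
    rw [AddSubgroup.closure_le]
    rintro v hv
    simp only [Set.mem_insert_iff, Set.mem_singleton_iff] at hv
    rcases hodd with ⟨k, hk⟩ | ⟨k, hk⟩
    · -- n odd, n = 2k+1
      rcases hv with rfl | rfl
      · rw [vec_eq (-(k:ℤ) - m*(k+1)) (-(k:ℤ) - m*k) ((n:ℤ)*m - n - m) ((n:ℤ)*m + n - m)
          ((n:ℤ)*m + n - m) ((n:ℤ)*m - n - m) (-(m:ℤ)) (-(m:ℤ))
          ⟨1 - k - m*k, by push_cast [hk]; ring⟩ ⟨-(k:ℤ)*(1+m), by push_cast [hk]; ring⟩]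
        exact combo_mem _ hc1 hc2 _ _
      · rw [vec_eq ((k:ℤ)+1) (k:ℤ) ((n:ℤ)*m - n - m) ((n:ℤ)*m + n - m)
          ((n:ℤ)*m + n - m) ((n:ℤ)*m - n - m) (-(n:ℤ)) ((n:ℤ))
          ⟨(k:ℤ), by push_cast [hk]; ring⟩ ⟨(k:ℤ), by push_cast [hk]; ring⟩]
        exact combo_mem _ hc1 hc2 _ _
    · -- m odd, m = 2k+1
      rcases hv with rfl | rfl
      · rw [vec_eq (-(k:ℤ)) ((k:ℤ)+1) ((n:ℤ)*m - n - m) ((n:ℤ)*m + n - m)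
          ((n:ℤ)*m + n - m) ((n:ℤ)*m - n - m) (-(m:ℤ)) (-(m:ℤ))
          ⟨1, by push_cast [hk]; ring⟩ ⟨0, by push_cast [hk]; ring⟩]
        exact combo_mem _ hc1 hc2 _ _
      · rw [vec_eq (1 - ((n:ℤ)-1)*k) (((n:ℤ)-1)*(k+1)) ((n:ℤ)*m - n - m) ((n:ℤ)*m + n - m)
          ((n:ℤ)*m + n - m) ((n:ℤ)*m - n - m) (-(n:ℤ)) ((n:ℤ))
          ⟨(n:ℤ)-1, by push_cast [hk]; ring⟩ ⟨0, by push_cast [hk]; ring⟩]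
        exact combo_mem _ hc1 hc2 _ _
  · -- colSpan ⊆ {a, b}
    rw [colSpan, AddSubgroup.closure_le]
    rintro v hv
    simp only [Set.mem_insert_iff, Set.mem_singleton_iff] at hv
    rcases hv with rfl | rfl | rfl | rfl
    · rw [vec_eq (1 - (n:ℤ)) 1 (-(m:ℤ)) (-(m:ℤ)) (-(n:ℤ)) ((n:ℤ))
        ((n:ℤ)*m - n - m) ((n:ℤ)*m + n - m) ⟨0, by ring⟩ ⟨0, by ring⟩]
      exact combo_mem _ ha hb _ _
    · rw [vec_eq (1 - (n:ℤ)) (-1) (-(m:ℤ)) (-(m:ℤ)) (-(n:ℤ)) ((n:ℤ))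
        ((n:ℤ)*m + n - m) ((n:ℤ)*m - n - m) ⟨0, by ring⟩ ⟨0, by ring⟩]
      exact combo_mem _ ha hb _ _
    · rw [vec_eq (-1 - (n:ℤ)) (-1) (-(m:ℤ)) (-(m:ℤ)) (-(n:ℤ)) ((n:ℤ))
        ((n:ℤ)*m + n + m) ((n:ℤ)*m - n + m) ⟨0, by ring⟩ ⟨0, by ring⟩]
      exact combo_mem _ ha hb _ _
    · rw [vec_eq (-1 - (n:ℤ)) 1 (-(m:ℤ)) (-(m:ℤ)) (-(n:ℤ)) ((n:ℤ))
        ((n:ℤ)*m - n + m) ((n:ℤ)*m + n + m) ⟨0, by ring⟩ ⟨0, by ring⟩]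
      exact combo_mem _ ha hb _ _
end

section
/- If n and m are both even (n, m > 1), then the subgroup of (ℤ/2nm)² generated by (−2m, −2m), (−2n, 2n), and (−n−m, n−m) equals the column span of the matrix with columns (nm−n−m, nm+n−m), (nm+n−m, nm−n−m), (nm+n+m, nm−n+m), (nm−n+m, nm+n+m) in (ℤ/2nm)². -/
/-- if `n` and `m` are both even, the subgroup of `(ℤ/2nm)²` generated by
`(−2m,−2m)`, `(−2n,2n)`, `(−n−m, n−m)` equals the column span of `S(n,m)`. -/
theorem stmt_9 (n m : ℕ) (hn : 1 < n) (hm : 1 < m) (hne : Even n) (hme : Even m) :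
    AddSubgroup.closure
      ({![((-(2*(m:ℤ)) : ℤ) : ZMod (2*n*m)), ((-(2*(m:ℤ)) : ℤ) : ZMod (2*n*m))],
        ![((-(2*(n:ℤ)) : ℤ) : ZMod (2*n*m)), ((2*(n:ℤ) : ℤ) : ZMod (2*n*m))],
        ![((-(n:ℤ) - m : ℤ) : ZMod (2*n*m)), (((n:ℤ) - m : ℤ) : ZMod (2*n*m))]} :
        Set (Fin 2 → ZMod (2*n*m)))
      = colSpan n m := by
  obtain ⟨k, hk⟩ := hne
  rw [colSpan]
  set N := 2*n*m with hN
  set g1 : Fin 2 → ZMod N := ![((-(2*(m:ℤ)) : ℤ) : ZMod N), ((-(2*(m:ℤ)) : ℤ) : ZMod N)] with hg1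
  set g2 : Fin 2 → ZMod N := ![((-(2*(n:ℤ)) : ℤ) : ZMod N), ((2*(n:ℤ) : ℤ) : ZMod N)] with hg2
  set g3 : Fin 2 → ZMod N := ![((-(n:ℤ) - m : ℤ) : ZMod N), (((n:ℤ) - m : ℤ) : ZMod N)] with hg3
  set c1 : Fin 2 → ZMod N := ![(((n:ℤ)*m - n - m : ℤ) : ZMod N), (((n:ℤ)*m + n - m : ℤ) : ZMod N)] with hc1
  set c2 : Fin 2 → ZMod N := ![(((n:ℤ)*m + n - m : ℤ) : ZMod N), (((n:ℤ)*m - n - m : ℤ) : ZMod N)] with hc2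
  set c3 : Fin 2 → ZMod N := ![(((n:ℤ)*m + n + m : ℤ) : ZMod N), (((n:ℤ)*m - n + m : ℤ) : ZMod N)] with hc3
  set c4 : Fin 2 → ZMod N := ![(((n:ℤ)*m - n + m : ℤ) : ZMod N), (((n:ℤ)*m + n + m : ℤ) : ZMod N)] with hc4
  have h0 : ((N : ℕ) : ZMod N) = 0 := ZMod.natCast_self _
  rw [hN] at h0
  push_cast at h0
  have hnk : ((n : ℕ) : ZMod N) = (k : ZMod N) + k := by
    rw [hk]; push_cast; ring
  have key1 : g1 = c1 + c2 := by
    funext i; fin_cases i <;> simp [hg1, hc1, hc2] <;> push_cast <;>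
      linear_combination (-1 : ZMod N) * h0
  have key2 : g2 = c1 - c2 := by
    funext i; fin_cases i <;> simp [hg2, hc1, hc2] <;> push_cast <;> ring
  have key3 : g3 = (1 - (k:ℤ)) • c1 + (-(k:ℤ)) • c2 := by
    funext i; fin_cases i <;> simp [hg3, hc1, hc2] <;> push_cast <;>
      linear_combination ((k:ZMod N) - 1) * h0 + (m : ZMod N) * hnk
  have key4 : c1 = g3 + (k:ℤ) • g1 := by
    funext i; fin_cases i <;> simp [hg1, hg3, hc1] <;> push_cast <;>
      linear_combination (1 : ZMod N) * h0 - (m : ZMod N) * hnk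
  have key5 : c2 = g3 + (k:ℤ) • g1 - g2 := by
    funext i; fin_cases i <;> simp [hg1, hg2, hg3, hc2] <;> push_cast <;>
      linear_combination (1 : ZMod N) * h0 - (m : ZMod N) * hnk
  have key6 : c3 = -g3 - (k:ℤ) • g1 := by
    funext i; fin_cases i <;> simp [hg1, hg3, hc3] <;> push_cast <;>
      linear_combination (m : ZMod N) * hnk
  have key7 : c4 = -g3 - (k:ℤ) • g1 + g2 := by
    funext i; fin_cases i <;> simp [hg1, hg2, hg3, hc4] <;> push_cast <;>
      linear_combination (m : ZMod N) * hnk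
  have memc1 : c1 ∈ AddSubgroup.closure {c1, c2, c3, c4} :=
    AddSubgroup.subset_closure (Set.mem_insert _ _)
  have memc2 : c2 ∈ AddSubgroup.closure {c1, c2, c3, c4} :=
    AddSubgroup.subset_closure (Set.mem_insert_of_mem _ (Set.mem_insert _ _))
  have memg1 : g1 ∈ AddSubgroup.closure {g1, g2, g3} :=
    AddSubgroup.subset_closure (Set.mem_insert _ _)
  have memg2 : g2 ∈ AddSubgroup.closure {g1, g2, g3} :=
    AddSubgroup.subset_closure (Set.mem_insert_of_mem _ (Set.mem_insert _ _))
  have memg3 : g3 ∈ AddSubgroup.closure {g1, g2, g3} :=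
    AddSubgroup.subset_closure (Set.mem_insert_of_mem _ (Set.mem_insert_of_mem _ rfl))
  apply le_antisymm
  · rw [AddSubgroup.closure_le]
    rintro x hx
    simp only [Set.mem_insert_iff, Set.mem_singleton_iff] at hx
    rcases hx with rfl | rfl | rfl
    · rw [key1]; exact add_mem memc1 memc2
    · rw [key2]; exact sub_mem memc1 memc2
    · rw [key3]; exact add_mem (zsmul_mem memc1 _) (zsmul_mem memc2 _)
  · rw [AddSubgroup.closure_le]
    rintro x hx
    simp only [Set.mem_insert_iff, Set.mem_singleton_iff] at hx
    rcases hx with rfl | rfl | rfl | rfl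
    · rw [key4]; exact add_mem memg3 (zsmul_mem memg1 _)
    · rw [key5]; exact sub_mem (add_mem memg3 (zsmul_mem memg1 _)) memg2
    · rw [key6]; exact sub_mem (neg_mem memg3) (zsmul_mem memg1 _)
    · rw [key7]; exact add_mem (sub_mem (neg_mem memg3) (zsmul_mem memg1 _)) memg2
end

section
/- Let n, m ≥ 2, l = lcm(n, m), γ = gcd(n, m), and let F = ℚ(ζ₂ₙ + ζ₂ₙ⁻¹, ζ₂ₘ + ζ₂ₘ⁻¹) ⊆ ℚ(ζ₂ₗ), where ζ_k = exp(2πi/k). Then [F : ℚ] = φ(2l)/4 if γ = 1, and [F : ℚ] = φ(2l)/2 if γ > 1. -/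
set_option maxHeartbeats 2000000
set_option synthInstance.maxHeartbeats 1000000
private lemma aux_sum_inv {K : Type*} [Field K] {u v : K} (hu : u ≠ 0) (hv : v ≠ 0) :
    u + u⁻¹ = v + v⁻¹ ↔ (u = v ∨ u * v = 1) := by
  constructor
  · intro h
    have h' : (u + u⁻¹) * (u * v) = (v + v⁻¹) * (u * v) := by rw [h]
    field_simp at h'
    have h2 : (u * v) * ((u - v) * (u * v - 1)) = 0 := by linear_combination (u * v) * h'
    rcases mul_eq_zero.1 h2 with h3 | h3
    · exact absurd h3 (mul_ne_zero hu hv)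
    rcases mul_eq_zero.1 h3 with h4 | h4
    · exact Or.inl (sub_eq_zero.1 h4)
    · exact Or.inr (sub_eq_zero.1 h4)
  · rintro (rfl | h)
    · rfl
    · have hv' : v = u⁻¹ := eq_inv_of_mul_eq_one_left (by rw [mul_comm]; exact h)
      rw [hv', inv_inv, add_comm]

private lemma aux_pow_mod {K : Type*} [Field K] {ζ : K} {k : ℕ} [NeZero k]
    (h : IsPrimitiveRoot ζ k) (a b : ℕ) : ζ ^ a = ζ ^ b ↔ a ≡ b [MOD k] := by
  lift ζ to Kˣ using h.isUnit (NeZero.ne k)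
  rw [IsPrimitiveRoot.coe_units_iff] at h
  rw [← Units.val_pow_eq_pow_val, ← Units.val_pow_eq_pow_val, ← Units.ext_iff,
    pow_eq_pow_iff_modEq, ← h.eq_orderOf]


open IntermediateField Polynomial in
open Complex in
/-- with `ζ_k = exp(2πi/k)` and `F = ℚ(ζ₂ₙ+ζ₂ₙ⁻¹, ζ₂ₘ+ζ₂ₘ⁻¹)`,
the degree `[F : ℚ]` is `φ(2·lcm(n,m))/4` if `gcd(n,m) = 1` and `φ(2·lcm(n,m))/2` otherwise. -/
theorem stmt_10 (n m : ℕ) (hn : 2 ≤ n) (hm : 2 ≤ m) :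
    let ζ : ℕ → ℂ := fun k => Complex.exp (2 * Real.pi * Complex.I / k)
    let F : IntermediateField ℚ ℂ :=
      IntermediateField.adjoin ℚ {ζ (2*n) + (ζ (2*n))⁻¹, ζ (2*m) + (ζ (2*m))⁻¹}
    (Nat.gcd n m = 1 →
      (Module.finrank ℚ F : ℚ) = (Nat.totient (2 * Nat.lcm n m) : ℚ) / 4) ∧
    (1 < Nat.gcd n m →
      (Module.finrank ℚ F : ℚ) = (Nat.totient (2 * Nat.lcm n m) : ℚ) / 2) := by
  intro ζ F
  have hn0 : n ≠ 0 := by omega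
  have hm0 : m ≠ 0 := by omega
  set l : ℕ := Nat.lcm n m with hl
  have hnl : n ∣ l := Nat.dvd_lcm_left n m
  have hml : m ∣ l := Nat.dvd_lcm_right n m
  have hl0 : l ≠ 0 := Nat.lcm_ne_zero hn0 hm0
  have hl2 : 2 ≤ l := le_trans hn (Nat.le_of_dvd (Nat.pos_of_ne_zero hl0) hnl)
  have h2l0 : 2 * l ≠ 0 := by omega
  have h2n2l : 2 * n ∣ 2 * l := mul_dvd_mul_left 2 hnl
  have h2m2l : 2 * m ∣ 2 * l := mul_dvd_mul_left 2 hml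
  haveI : NeZero (2 * l) := ⟨h2l0⟩
  haveI : NeZero (2 * n) := ⟨by omega⟩
  haveI : NeZero (2 * m) := ⟨by omega⟩
  have hζl : IsPrimitiveRoot (ζ (2 * l)) (2 * l) := Complex.isPrimitiveRoot_exp _ h2l0
  have hζn : IsPrimitiveRoot (ζ (2 * n)) (2 * n) := Complex.isPrimitiveRoot_exp _ (by omega)
  have hζm : IsPrimitiveRoot (ζ (2 * m)) (2 * m) := Complex.isPrimitiveRoot_exp _ (by omega)
  have hpow : ∀ k : ℕ, k ≠ 0 → k ∣ l → ζ (2 * l) ^ (l / k) = ζ (2 * k) := by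
    intro k hk hkl
    have hd0 : l / k ≠ 0 := by
      have := Nat.div_pos (Nat.le_of_dvd (Nat.pos_of_ne_zero hl0) hkl) (Nat.pos_of_ne_zero hk)
      omega
    have hdk : k * (l / k) = l := Nat.mul_div_cancel' hkl
    show Complex.exp _ ^ _ = _
    rw [← Complex.exp_nat_mul]
    congr 1
    have hk' : ((2 * k : ℕ) : ℂ) ≠ 0 := Nat.cast_ne_zero.2 (by omega)
    have hd' : ((l / k : ℕ) : ℂ) ≠ 0 := Nat.cast_ne_zero.2 hd0
    have h2l' : ((2 * l : ℕ) : ℂ) ≠ 0 := Nat.cast_ne_zero.2 h2l0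
    have hnat : 2 * l = 2 * k * (l / k) := by rw [mul_assoc, hdk]
    have hcast : ((2 * l : ℕ) : ℂ) = ((2 * k : ℕ) : ℂ) * ((l / k : ℕ) : ℂ) := by
      exact_mod_cast congrArg (Nat.cast (R := ℂ)) hnat
    have key : ∀ x c d : ℂ, c ≠ 0 → d ≠ 0 → d * (x / (c * d)) = x / c := by
      intro x c d hc hd; field_simp
    rw [hcast]
    exact key _ _ _ hk' hd'
  -- K setup
  set z2l : ℂ := ζ (2 * l) with hz2l
  have hint : IsIntegral ℚ z2l := (hζl.isIntegral (by omega)).tower_top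
  set K : IntermediateField ℚ ℂ := ℚ⟮z2l⟯ with hK
  have hsub : K.toSubalgebra = Algebra.adjoin ℚ {z2l} :=
    adjoin_simple_toSubalgebra_of_isAlgebraic hint.isAlgebraic
  set N : ℕ+ := ⟨2 * l, by omega⟩ with hNdef
  haveI : NeZero ((N : ℕ)) := ⟨h2l0⟩
  haveI : IsCyclotomicExtension {(N : ℕ)} ℚ K := by
    refine IsCyclotomicExtension.equiv _ _ _ (h := ?_) (.refl : K.toSubalgebra ≃ₐ[ℚ] _)
    rw [hsub]
    exact hζl.adjoin_isCyclotomicExtension (n := N) ℚ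
  haveI := IsCyclotomicExtension.finiteDimensional {(N : ℕ)} ℚ K
  haveI : IsGalois ℚ K := IsCyclotomicExtension.isGalois (S := {(N : ℕ)}) ℚ K
  have hirr : Irreducible (cyclotomic (N : ℕ) ℚ) := Polynomial.cyclotomic.irreducible_rat N.pos
  have hrankK : Module.finrank ℚ K = Nat.totient (2 * l) :=
    IsCyclotomicExtension.finrank (n := N) K hirr
  set e := IsCyclotomicExtension.autEquivPow (n := N) K hirr with he
  set zK : K := IsCyclotomicExtension.zeta N ℚ K with hzK
  have hzKspec : IsPrimitiveRoot zK N := IsCyclotomicExtension.zeta_spec N ℚ K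
  haveI : NeZero ((N : ℕ)) := ⟨h2l0⟩
  have h2nN : 2 * n ∣ (N : ℕ) := h2n2l
  have h2mN : 2 * m ∣ (N : ℕ) := h2m2l
  have hspec : ∀ (σ : K ≃ₐ[ℚ] K) (μ : K), μ ^ (N : ℕ) = 1 →
      σ μ = μ ^ ((e σ : ZMod (N : ℕ)) : ZMod (N : ℕ)).val := by
    intro σ μ hμ
    obtain ⟨j, -, hj⟩ := hzKspec.eq_pow_of_pow_eq_one hμ
    have hσz : σ zK = zK ^ ((e σ : ZMod (N : ℕ)) : ZMod (N : ℕ)).val := by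
      have := hzKspec.autToPow_spec ℚ σ
      rw [he]
      simp only [IsCyclotomicExtension.autEquivPow_apply]
      exact this.symm
    rw [← hj, map_pow, hσz, ← pow_mul, mul_comm, pow_mul]
  -- the two roots inside K
  have hznmem : ζ (2 * n) ∈ K := by
    rw [← hpow n hn0 hnl]
    exact pow_mem (mem_adjoin_simple_self ℚ z2l) _
  have hzmmem : ζ (2 * m) ∈ K := by
    rw [← hpow m hm0 hml]
    exact pow_mem (mem_adjoin_simple_self ℚ z2l) _
  set znK : K := ⟨ζ (2 * n), hznmem⟩ with hznK
  set zmK : K := ⟨ζ (2 * m), hzmmem⟩ with hzmK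
  have hznKprim : IsPrimitiveRoot znK (2 * n) := by
    rw [← IsPrimitiveRoot.coe_submonoidClass_iff (B := IntermediateField ℚ ℂ)]
    exact hζn
  have hzmKprim : IsPrimitiveRoot zmK (2 * m) := by
    rw [← IsPrimitiveRoot.coe_submonoidClass_iff (B := IntermediateField ℚ ℂ)]
    exact hζm
  have hznK0 : znK ≠ 0 := by
    intro h
    have : (znK : ℂ) = 0 := by rw [h]; rfl
    exact Complex.exp_ne_zero _ this
  have hzmK0 : zmK ≠ 0 := by
    intro h
    have : (zmK : ℂ) = 0 := by rw [h]; rfl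
    exact Complex.exp_ne_zero _ this
  have hzn2l : znK ^ (2 * l) = 1 := by
    obtain ⟨c, hc⟩ := h2n2l
    rw [hc, pow_mul, hznKprim.pow_eq_one, one_pow]
  have hzm2l : zmK ^ (2 * l) = 1 := by
    obtain ⟨c, hc⟩ := h2m2l
    rw [hc, pow_mul, hzmKprim.pow_eq_one, one_pow]
  set E : IntermediateField ℚ K := IntermediateField.adjoin ℚ {znK + znK⁻¹, zmK + zmK⁻¹} with hE
  -- F is the image of E
  have hFE : Module.finrank ℚ F = Module.finrank ℚ (↥E) := by
    have h1 : E.map K.val = F := by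
      rw [hE]
      erw [IntermediateField.adjoin_map]
      congr 1
      simp only [Set.image_insert_eq, Set.image_singleton]
      congr 1
    rw [← h1]
    exact (LinearEquiv.finrank_eq (IntermediateField.equivMap E K.val).toLinearEquiv).symm
  -- fixing subgroup characterisation
  have hgenfix : ∀ σ : K ≃ₐ[ℚ] K, σ ∈ E.fixingSubgroup ↔
      (σ (znK + znK⁻¹) = znK + znK⁻¹ ∧ σ (zmK + zmK⁻¹) = zmK + zmK⁻¹) := by
    intro σ
    rw [IntermediateField.mem_fixingSubgroup_iff]
    constructor
    · intro h
      exact ⟨h _ (IntermediateField.subset_adjoin ℚ _ (by simp)),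
             h _ (IntermediateField.subset_adjoin ℚ _ (by simp))⟩
    · rintro ⟨h1, h2⟩ x hx
      induction hx using IntermediateField.adjoin_induction with
      | mem y hy =>
        rcases hy with rfl | hy
        · exact h1
        · rcases hy with rfl
          exact h2
      | algebraMap r => exact σ.commutes r
      | add x y hx hy ihx ihy => rw [map_add, ihx, ihy]
      | inv x hx ihx => rw [map_inv₀, ihx]
      | mul x y hx hy ihx ihy => rw [map_mul, ihx, ihy]
  set φn : ZMod (N : ℕ) →+* ZMod (2 * n) := ZMod.castHom h2nN (ZMod (2 * n)) with hφn
  set φm : ZMod (N : ℕ) →+* ZMod (2 * m) := ZMod.castHom h2mN (ZMod (2 * m)) with hφm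
  have htrans : ∀ (k : ℕ) (hk2 : 2 ≤ k) (hdvd : 2 * k ∣ (N : ℕ)) (w : K),
      IsPrimitiveRoot w (2 * k) → w ≠ 0 → ∀ σ : K ≃ₐ[ℚ] K,
      (σ (w + w⁻¹) = w + w⁻¹ ↔
        (ZMod.castHom hdvd (ZMod (2 * k)) ((e σ : (ZMod (N : ℕ))ˣ) : ZMod (N : ℕ)) = 1 ∨
         ZMod.castHom hdvd (ZMod (2 * k)) ((e σ : (ZMod (N : ℕ))ˣ) : ZMod (N : ℕ)) = -1)) := by
    intro k hk2 hdvd w hw hw0 σ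
    haveI : NeZero (2 * k) := ⟨by omega⟩
    set x : ZMod (N : ℕ) := ((e σ : (ZMod (N : ℕ))ˣ) : ZMod (N : ℕ)) with hx
    set a : ℕ := x.val with ha
    have hw2l : w ^ (N : ℕ) = 1 := by
      obtain ⟨c, hc⟩ := hdvd
      rw [hc, pow_mul, hw.pow_eq_one, one_pow]
    have h1 : σ (w + w⁻¹) = w ^ a + (w ^ a)⁻¹ := by
      rw [map_add, map_inv₀, hspec σ w hw2l]
    rw [h1, aux_sum_inv (pow_ne_zero _ hw0) hw0]
    apply or_congr
    · calc w ^ a = w ↔ w ^ a = w ^ 1 := by rw [pow_one]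
        _ ↔ a ≡ 1 [MOD 2 * k] := aux_pow_mod hw a 1
        _ ↔ ((a : ℕ) : ZMod (2 * k)) = ((1 : ℕ) : ZMod (2 * k)) :=
            (ZMod.natCast_eq_natCast_iff _ _ _).symm
        _ ↔ ZMod.castHom hdvd (ZMod (2 * k)) x = 1 := by
            rw [ha, ZMod.natCast_val, ZMod.castHom_apply, Nat.cast_one]
    · calc w ^ a * w = 1 ↔ w ^ (a + 1) = 1 := by rw [pow_succ]
        _ ↔ 2 * k ∣ a + 1 := hw.pow_eq_one_iff_dvd _
        _ ↔ ((a + 1 : ℕ) : ZMod (2 * k)) = 0 := (ZMod.natCast_eq_zero_iff _ _).symm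
        _ ↔ ZMod.castHom hdvd (ZMod (2 * k)) x + 1 = 0 := by
            rw [Nat.cast_add, Nat.cast_one, ha, ZMod.natCast_val, ZMod.castHom_apply]
        _ ↔ ZMod.castHom hdvd (ZMod (2 * k)) x = -1 := by
            rw [eq_neg_iff_add_eq_zero]
  set P : (ZMod (N : ℕ))ˣ → Prop :=
    fun u => (φn (u : ZMod (N : ℕ)) = 1 ∨ φn (u : ZMod (N : ℕ)) = -1) ∧
             (φm (u : ZMod (N : ℕ)) = 1 ∨ φm (u : ZMod (N : ℕ)) = -1) with hP
  have hfixP : ∀ σ : K ≃ₐ[ℚ] K, σ ∈ E.fixingSubgroup ↔ P (e σ) := by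
    intro σ
    rw [hgenfix σ]
    exact and_congr (htrans n hn h2nN znK hznKprim hznK0 σ)
      (htrans m hm h2mN zmK hzmKprim hzmK0 σ)
  have hcardfixP : Nat.card E.fixingSubgroup = Nat.card {u : (ZMod (N : ℕ))ˣ // P u} :=
    Nat.card_congr (Equiv.subtypeEquiv e.toEquiv hfixP)
  have hfinrankEK : Module.finrank (↥E) (↥K) = Nat.card E.fixingSubgroup := by
    classical
    rw [← IsGalois.card_fixingSubgroup_eq_finrank E, Nat.card_eq_fintype_card]
  have htower : Module.finrank ℚ (↥E) * Module.finrank (↥E) (↥K) = Module.finrank ℚ (↥K) :=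
    Module.finrank_mul_finrank ℚ (↥E) (↥K)
  have key : ∀ c : ℕ, 0 < c → Nat.card {u : (ZMod (N : ℕ))ˣ // P u} = c →
      (Module.finrank ℚ F : ℚ) = (Nat.totient (2 * l) : ℚ) / (c : ℚ) := by
    intro c hc hcard
    have h1 : Module.finrank ℚ (↥E) * c = Nat.totient (2 * l) := by
      rw [← hcard, ← hcardfixP, ← hfinrankEK, htower, hrankK]
    rw [hFE, eq_div_iff (by exact_mod_cast hc.ne')]
    exact_mod_cast h1
  -- injectivity of the pair of casts
  have hinj : ∀ x y : ZMod (N : ℕ), φn x = φn y → φm x = φm y → x = y := by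
    intro x y h1 h2
    have hz : ∀ z : ZMod (N : ℕ), φn z = 0 → φm z = 0 → z = 0 := by
      intro z hzn hzm
      rw [hφn, ZMod.castHom_apply, ← ZMod.natCast_val] at hzn
      rw [hφm, ZMod.castHom_apply, ← ZMod.natCast_val] at hzm
      have d1 : 2 * n ∣ z.val := (ZMod.natCast_eq_zero_iff _ _).1 hzn
      have d2 : 2 * m ∣ z.val := (ZMod.natCast_eq_zero_iff _ _).1 hzm
      have hlcm : Nat.lcm (2 * n) (2 * m) = (N : ℕ) := by
        show _ = 2 * l
        rw [hl, Nat.lcm_mul_left]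
      have dl : (N : ℕ) ∣ z.val := by
        have h := Nat.lcm_dvd d1 d2
        rwa [hlcm] at h
      have hzz : (z.val : ZMod (N : ℕ)) = 0 := (ZMod.natCast_eq_zero_iff _ _).2 dl
      rwa [ZMod.natCast_val, ZMod.cast_id] at hzz
    have h3 := hz (x - y) (by rw [map_sub, h1, sub_self]) (by rw [map_sub, h2, sub_self])
    exact sub_eq_zero.1 h3
  have huinj : ∀ u v : (ZMod (N : ℕ))ˣ, φn (u : ZMod (N : ℕ)) = φn (v : ZMod (N : ℕ)) →
      φm (u : ZMod (N : ℕ)) = φm (v : ZMod (N : ℕ)) → u = v :=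
    fun u v h1 h2 => Units.ext (hinj _ _ h1 h2)
  haveI : Fact (2 < 2 * n) := ⟨by omega⟩
  haveI : Fact (2 < 2 * m) := ⟨by omega⟩
  haveI : Fact (2 < (N : ℕ)) := ⟨show 2 < 2 * l by omega⟩
  have hφn1 : φn ((1 : (ZMod (N : ℕ))ˣ) : ZMod (N : ℕ)) = 1 := by rw [Units.val_one, map_one]
  have hφm1 : φm ((1 : (ZMod (N : ℕ))ˣ) : ZMod (N : ℕ)) = 1 := by rw [Units.val_one, map_one]
  have hφnm1 : φn ((-1 : (ZMod (N : ℕ))ˣ) : ZMod (N : ℕ)) = -1 := by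
    rw [Units.val_neg, Units.val_one, map_neg, map_one]
  have hφmm1 : φm ((-1 : (ZMod (N : ℕ))ˣ) : ZMod (N : ℕ)) = -1 := by
    rw [Units.val_neg, Units.val_one, map_neg, map_one]
  have hone_ne : (1 : (ZMod (N : ℕ))ˣ) ≠ -1 := by
    intro h
    have h' := congrArg (fun u : (ZMod (N : ℕ))ˣ => φn (u : ZMod (N : ℕ))) h
    simp only [hφn1, hφnm1] at h'
    exact ZMod.neg_one_ne_one h'.symm
  -- a mixed sign pattern forces gcd = 1
  have hmixed : ∀ u : (ZMod (N : ℕ))ˣ, φn (u : ZMod (N : ℕ)) = 1 →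
      φm (u : ZMod (N : ℕ)) = -1 → Nat.gcd n m = 1 := by
    intro u h1 h2
    set a : ℕ := ((u : ZMod (N : ℕ))).val with ha
    have hcastn : ((a : ℤ) : ZMod (2 * n)) = φn (u : ZMod (N : ℕ)) := by
      push_cast
      rw [ha, ZMod.natCast_val, hφn, ZMod.castHom_apply]
    have hcastm : ((a : ℤ) : ZMod (2 * m)) = φm (u : ZMod (N : ℕ)) := by
      push_cast
      rw [ha, ZMod.natCast_val, hφm, ZMod.castHom_apply]
    have d1 : ((2 * n : ℕ) : ℤ) ∣ (a : ℤ) - 1 := by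
      rw [← ZMod.intCast_zmod_eq_zero_iff_dvd, Int.cast_sub, Int.cast_one, hcastn, h1, sub_self]
    have d2 : ((2 * m : ℕ) : ℤ) ∣ (a : ℤ) + 1 := by
      rw [← ZMod.intCast_zmod_eq_zero_iff_dvd, Int.cast_add, Int.cast_one, hcastm, h2,
        neg_add_cancel]
    have g1 : ((2 * Nat.gcd n m : ℕ) : ℤ) ∣ ((2 * n : ℕ) : ℤ) :=
      Int.natCast_dvd_natCast.2 (Nat.mul_dvd_mul_left 2 (Nat.gcd_dvd_left n m))
    have g2 : ((2 * Nat.gcd n m : ℕ) : ℤ) ∣ ((2 * m : ℕ) : ℤ) :=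
      Int.natCast_dvd_natCast.2 (Nat.mul_dvd_mul_left 2 (Nat.gcd_dvd_right n m))
    have hdd : ((2 * Nat.gcd n m : ℕ) : ℤ) ∣ ((a : ℤ) + 1) - ((a : ℤ) - 1) :=
      dvd_sub (g2.trans d2) (g1.trans d1)
    have h22 : ((a : ℤ) + 1) - ((a : ℤ) - 1) = ((2 : ℕ) : ℤ) := by push_cast; ring
    rw [h22, Int.natCast_dvd_natCast] at hdd
    have hle : 2 * Nat.gcd n m ≤ 2 := Nat.le_of_dvd (by norm_num) hdd
    have hg0 : Nat.gcd n m ≠ 0 := fun h => hn0 (Nat.eq_zero_of_gcd_eq_zero_left h)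
    omega
  constructor
  · -- gcd = 1 case
    intro hgcd
    have hbez : (n : ℤ) * Nat.gcdA n m + (m : ℤ) * Nat.gcdB n m = 1 := by
      have h := Nat.gcd_eq_gcd_ab n m
      rw [hgcd] at h
      push_cast at h
      linarith
    set A : ℤ := 2 * Nat.gcdA n m * n - 1 with hA
    set v0 : ZMod (N : ℕ) := ((A : ℤ) : ZMod (N : ℕ)) with hv0
    have hv0n : φn v0 = -1 := by
      have h0 : ((A + 1 : ℤ) : ZMod (2 * n)) = 0 := by
        rw [ZMod.intCast_zmod_eq_zero_iff_dvd]
        exact ⟨Nat.gcdA n m, by rw [hA]; push_cast; ring⟩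
      have h1 : φn v0 = ((A : ℤ) : ZMod (2 * n)) := by
        rw [hφn, hv0]; exact map_intCast (ZMod.castHom h2nN (ZMod (2 * n))) A
      rw [Int.cast_add, Int.cast_one] at h0
      rw [h1]
      exact eq_neg_of_add_eq_zero_left h0
    have hv0m : φm v0 = 1 := by
      have h0 : ((A - 1 : ℤ) : ZMod (2 * m)) = 0 := by
        rw [ZMod.intCast_zmod_eq_zero_iff_dvd]
        exact ⟨-Nat.gcdB n m, by rw [hA]; push_cast; linear_combination 2 * hbez⟩
      have h1 : φm v0 = ((A : ℤ) : ZMod (2 * m)) := by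
        rw [hφm, hv0]; exact map_intCast (ZMod.castHom h2mN (ZMod (2 * m))) A
      rw [Int.cast_sub, Int.cast_one] at h0
      rw [h1]
      have := sub_eq_zero.1 h0
      rw [this]
    have hv0sq : v0 * v0 = 1 := by
      refine hinj _ _ ?_ ?_
      · rw [map_mul, map_one, hv0n]; ring
      · rw [map_mul, map_one, hv0m]; ring
    set u0 : (ZMod (N : ℕ))ˣ := ⟨v0, v0, hv0sq, hv0sq⟩ with hu0
    have hu0v : (u0 : ZMod (N : ℕ)) = v0 := rfl
    have hPset : {u : (ZMod (N : ℕ))ˣ | P u} = {1, -1, u0, -u0} := by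
      ext u
      simp only [Set.mem_setOf_eq, Set.mem_insert_iff, Set.mem_singleton_iff]
      constructor
      · rintro ⟨h1 | h1, h2 | h2⟩
        · exact Or.inl (huinj u 1 (by rw [h1, hφn1]) (by rw [h2, hφm1]))
        · refine Or.inr (Or.inr (Or.inr (huinj u (-u0) ?_ ?_)))
          · rw [h1, Units.val_neg, hu0v, map_neg, hv0n, neg_neg]
          · rw [h2, Units.val_neg, hu0v, map_neg, hv0m]
        · exact Or.inr (Or.inr (Or.inl
            (huinj u u0 (by rw [h1, hu0v, hv0n]) (by rw [h2, hu0v, hv0m]))))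
        · exact Or.inr (Or.inl (huinj u (-1) (by rw [h1, hφnm1]) (by rw [h2, hφmm1])))
      · rintro (rfl | rfl | rfl | rfl)
        · exact ⟨Or.inl hφn1, Or.inl hφm1⟩
        · exact ⟨Or.inr hφnm1, Or.inr hφmm1⟩
        · exact ⟨Or.inr (by rw [hu0v, hv0n]), Or.inl (by rw [hu0v, hv0m])⟩
        · exact ⟨Or.inl (by rw [Units.val_neg, hu0v, map_neg, hv0n, neg_neg]),
                 Or.inr (by rw [Units.val_neg, hu0v, map_neg, hv0m])⟩
    have hn1 : (-1 : ZMod (2 * n)) ≠ 1 := ZMod.neg_one_ne_one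
    have hm1 : (-1 : ZMod (2 * m)) ≠ 1 := ZMod.neg_one_ne_one
    have d13 : (1 : (ZMod (N : ℕ))ˣ) ≠ u0 := by
      intro h
      apply hn1
      calc (-1 : ZMod (2 * n)) = φn (u0 : ZMod (N : ℕ)) := by rw [hu0v, hv0n]
        _ = φn ((1 : (ZMod (N : ℕ))ˣ) : ZMod (N : ℕ)) := by rw [← h]
        _ = 1 := hφn1
    have d14 : (1 : (ZMod (N : ℕ))ˣ) ≠ -u0 := by
      intro h
      apply hm1
      calc (-1 : ZMod (2 * m)) = φm ((-u0 : (ZMod (N : ℕ))ˣ) : ZMod (N : ℕ)) := by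
            rw [Units.val_neg, hu0v, map_neg, hv0m]
        _ = φm ((1 : (ZMod (N : ℕ))ˣ) : ZMod (N : ℕ)) := by rw [← h]
        _ = 1 := hφm1
    have d23 : (-1 : (ZMod (N : ℕ))ˣ) ≠ u0 := by
      intro h
      apply hm1
      calc (-1 : ZMod (2 * m)) = φm ((-1 : (ZMod (N : ℕ))ˣ) : ZMod (N : ℕ)) := hφmm1.symm
        _ = φm (u0 : ZMod (N : ℕ)) := by rw [h]
        _ = 1 := by rw [hu0v, hv0m]
    have d24 : (-1 : (ZMod (N : ℕ))ˣ) ≠ -u0 := by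
      intro h
      apply hn1
      calc (-1 : ZMod (2 * n)) = φn ((-1 : (ZMod (N : ℕ))ˣ) : ZMod (N : ℕ)) := hφnm1.symm
        _ = φn ((-u0 : (ZMod (N : ℕ))ˣ) : ZMod (N : ℕ)) := by rw [h]
        _ = 1 := by rw [Units.val_neg, hu0v, map_neg, hv0n, neg_neg]
    have d34 : u0 ≠ -u0 := by
      intro h
      apply hn1
      calc (-1 : ZMod (2 * n)) = φn (u0 : ZMod (N : ℕ)) := by rw [hu0v, hv0n]
        _ = φn ((-u0 : (ZMod (N : ℕ))ˣ) : ZMod (N : ℕ)) := by rw [← h]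
        _ = 1 := by rw [Units.val_neg, hu0v, map_neg, hv0n, neg_neg]
    have hcard4 : Nat.card {u : (ZMod (N : ℕ))ˣ // P u} = 4 := by
      have hcc : Nat.card {u : (ZMod (N : ℕ))ˣ // P u} =
          ({u : (ZMod (N : ℕ))ˣ | P u} : Set _).ncard := Nat.card_coe_set_eq _
      rw [hcc, hPset,
        Set.ncard_insert_of_notMem (by simp [hone_ne, d13, d14]),
        Set.ncard_insert_of_notMem (by simp [d23, d24]),
        Set.ncard_pair d34]
    simpa using key 4 (by norm_num) hcard4
  · -- gcd > 1 case
    intro hgcd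
    have hPset : {u : (ZMod (N : ℕ))ˣ | P u} = {1, -1} := by
      ext u
      simp only [Set.mem_setOf_eq, Set.mem_insert_iff, Set.mem_singleton_iff]
      constructor
      · rintro ⟨h1 | h1, h2 | h2⟩
        · exact Or.inl (huinj u 1 (by rw [h1, hφn1]) (by rw [h2, hφm1]))
        · exact absurd (hmixed u h1 h2) (by omega)
        · refine absurd (hmixed (-u) ?_ ?_) (by omega)
          · rw [Units.val_neg, map_neg, h1, neg_neg]
          · rw [Units.val_neg, map_neg, h2]
        · exact Or.inr (huinj u (-1) (by rw [h1, hφnm1]) (by rw [h2, hφmm1]))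
      · rintro (rfl | rfl)
        · exact ⟨Or.inl hφn1, Or.inl hφm1⟩
        · exact ⟨Or.inr hφnm1, Or.inr hφmm1⟩
    have hcard2 : Nat.card {u : (ZMod (N : ℕ))ˣ // P u} = 2 := by
      have hcc : Nat.card {u : (ZMod (N : ℕ))ˣ // P u} =
          ({u : (ZMod (N : ℕ))ˣ | P u} : Set _).ncard := Nat.card_coe_set_eq _
      rw [hcc, hPset, Set.ncard_pair hone_ne]
    simpa using key 2 (by norm_num) hcard2
end

section
/- Let n, m > 1 with nm ≥ 6 and N = 2nm. For any r in the row span of S(n,m) (the subgroup of (ℤ/N)⁴ generated by (nm−n−m, nm+n−m, nm+n+m, nm−n+m) and (nm+n−m, nm−n−m, nm−n+m, nm+n+m)) with all entries nonzero, the quantity λ(r) = 2·min_{j∈{1,2,3,4}} min(t_j(−r), 1 − t_j(−r)) / (1 − 1/n − 1/m) is a positive rational number and is an integer multiple of gcd(n,m)/(nm − n − m). -/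
lemma gcd_dvd_val (n m : ℕ) (hn : 0 < n) (hm : 0 < m) (r : Fin 4 → ZMod (2*n*m))
    (hr : r ∈ rowSpan n m) (j : Fin 4) : Nat.gcd n m ∣ (r j).val := by
  set d := Nat.gcd n m with hd
  have hd0 : 0 < d := Nat.gcd_pos_of_pos_left m hn
  haveI : NeZero d := ⟨hd0.ne'⟩
  haveI : NeZero (2*n*m) := ⟨by positivity⟩
  have hdn : d ∣ n := Nat.gcd_dvd_left n m
  have hdm : d ∣ m := Nat.gcd_dvd_right n m
  have hdN : d ∣ 2*n*m := Dvd.dvd.trans hdn ⟨2*m, by ring⟩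
  set f : ZMod (2*n*m) →+* ZMod d := ZMod.castHom hdN (ZMod d) with hf
  have hdi : ∀ e : ℤ, (d:ℤ) ∣ e → f ((e : ℤ) : ZMod (2*n*m)) = 0 := by
    intro e he
    rw [map_intCast]
    exact (ZMod.intCast_zmod_eq_zero_iff_dvd e d).2 he
  have hdnZ : (d:ℤ) ∣ (n:ℤ) := Int.natCast_dvd_natCast.2 hdn
  have hdmZ : (d:ℤ) ∣ (m:ℤ) := Int.natCast_dvd_natCast.2 hdm
  have hnm : (d:ℤ) ∣ (n:ℤ)*m := hdnZ.mul_right m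
  have key : ∀ j, f (r j) = 0 := by
    refine AddSubgroup.closure_induction ?_ (by simp) ?_ ?_ hr
    · intro g hg j
      rcases hg with hg | hg <;> subst hg <;> fin_cases j <;>
        simp only [row1, row2, Matrix.cons_val_zero, Matrix.cons_val_one, Matrix.head_cons,
          Matrix.cons_val_two, Matrix.cons_val_three, Matrix.tail_cons, Fin.isValue,
          Matrix.cons_val', Matrix.cons_val_fin_one, Matrix.empty_val'] <;>
        apply hdi <;>
        first
          | exact dvd_sub (dvd_sub hnm hdnZ) hdmZ
          | exact dvd_sub (dvd_add hnm hdnZ) hdmZ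
          | exact dvd_add (dvd_add hnm hdnZ) hdmZ
          | exact dvd_add (dvd_sub hnm hdnZ) hdmZ
    · intro a b _ _ ha hb j
      simp [Pi.add_apply, map_add, ha j, hb j]
    · intro a _ ha j
      simp [Pi.neg_apply, map_neg, ha j]
  have := key j
  rw [ZMod.castHom_apply, ← ZMod.natCast_val] at this
  exact (ZMod.natCast_eq_zero_iff _ d).1 this

/-- for `r` in the row span of `S(n,m)` with all entries nonzero, the Lyapunov
exponent `λ(r) = 2·min_j min(t_j(−r), 1−t_j(−r)) / (1 − 1/n − 1/m)` is a positive rational and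
an integer multiple of `gcd(n,m)/(nm − n − m)`. -/
theorem stmt_13 (n m : ℕ) (hn : 1 < n) (hm : 1 < m) (h6 : 6 ≤ n * m)
    (r : Fin 4 → ZMod (2*n*m)) (hr : r ∈ rowSpan n m) (hnz : ∀ j, r j ≠ 0) :
    let lam : ℚ :=
      2 * (min (min (min (tfrac (-r 0)) (1 - tfrac (-r 0))) (min (tfrac (-r 1)) (1 - tfrac (-r 1))))
            (min (min (tfrac (-r 2)) (1 - tfrac (-r 2))) (min (tfrac (-r 3)) (1 - tfrac (-r 3)))))
        / (1 - 1/(n:ℚ) - 1/(m:ℚ))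
    0 < lam ∧ ∃ c : ℤ, lam = c * ((Nat.gcd n m : ℚ) / ((n:ℚ)*m - n - m)) := by
  intro lam
  haveI : NeZero (2*n*m) := ⟨by positivity⟩
  have dvd_min : ∀ a b : ℕ, Nat.gcd n m ∣ a → Nat.gcd n m ∣ b → Nat.gcd n m ∣ min a b := by
    intro a b ha hb
    rcases le_total a b with h | h
    · rwa [min_eq_left h]
    · rwa [min_eq_right h]
  have hd0 : 0 < Nat.gcd n m := Nat.gcd_pos_of_pos_left m (by omega)
  have hdn : Nat.gcd n m ∣ n := Nat.gcd_dvd_left n m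
  have hdN : Nat.gcd n m ∣ 2*n*m := hdn.trans ⟨2*m, by ring⟩
  have hN0 : 0 < 2*n*m := by positivity
  have hNQ : (0:ℚ) < (2*n*m : ℕ) := by exact_mod_cast hN0
  set v : Fin 4 → ℕ := fun j => (-(r j)).val with hvdef
  have hrneg : (-r) ∈ rowSpan n m := neg_mem hr
  have hdv : ∀ j, Nat.gcd n m ∣ v j := fun j =>
    gcd_dvd_val n m (by omega) (by omega) (-r) hrneg j
  have hv1 : ∀ j, 1 ≤ v j := by
    intro j
    have h1 : -(r j) ≠ 0 := neg_ne_zero.2 (hnz j)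
    have h2 := ZMod.val_eq_zero (-(r j))
    exact Nat.one_le_iff_ne_zero.2 fun h => h1 (h2.1 h)
  have hvlt : ∀ j, v j < 2*n*m := fun j => ZMod.val_lt _
  set w : Fin 4 → ℕ := fun j => min (v j) (2*n*m - v j) with hwdef
  have hdw : ∀ j, Nat.gcd n m ∣ w j := fun j =>
    dvd_min _ _ (hdv j) (Nat.dvd_sub hdN (hdv j))
  have hw1 : ∀ j, 1 ≤ w j := by
    intro j
    have := hv1 j; have := hvlt j
    simp only [hwdef, le_min_iff]
    omega
  set k : ℕ := min (min (w 0) (w 1)) (min (w 2) (w 3)) with hkdef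
  have hdk : Nat.gcd n m ∣ k :=
    dvd_min _ _ (dvd_min _ _ (hdw 0) (hdw 1)) (dvd_min _ _ (hdw 2) (hdw 3))
  have hk1 : 1 ≤ k :=
    le_min (le_min (hw1 0) (hw1 1)) (le_min (hw1 2) (hw1 3))
  -- per-coordinate min as rationals
  have key : ∀ j : Fin 4, min (tfrac (-(r j))) (1 - tfrac (-(r j))) = (w j : ℚ) / (2*n*m : ℕ) := by
    intro j
    have h1 : tfrac (-(r j)) = (v j : ℚ) / (2*n*m : ℕ) := rfl
    have h2 : (1:ℚ) - (v j : ℚ) / (2*n*m : ℕ) = ((2*n*m - v j : ℕ) : ℚ) / (2*n*m : ℕ) := by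
      rw [Nat.cast_sub (le_of_lt (hvlt j))]
      field_simp
    rw [h1, h2, min_div_div_right (le_of_lt hNQ), ← Nat.cast_min]
  -- the big min equals k / N
  have hbig : lam = 2 * ((k : ℚ) / (2*n*m : ℕ)) / (1 - 1/(n:ℚ) - 1/(m:ℚ)) := by
    show 2 * _ / _ = _
    rw [key 0, key 1, key 2, key 3,
      min_div_div_right (le_of_lt hNQ), ← Nat.cast_min,
      min_div_div_right (le_of_lt hNQ), ← Nat.cast_min,
      min_div_div_right (le_of_lt hNQ), ← Nat.cast_min]
  -- arithmetic
  have hnQ : (2:ℚ) ≤ n := by exact_mod_cast hn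
  have hmQ : (2:ℚ) ≤ m := by exact_mod_cast hm
  have h6Q : (6:ℚ) ≤ (n:ℚ) * m := by exact_mod_cast h6
  have hA : (0:ℚ) < (n:ℚ)*m - n - m := by
    nlinarith [mul_nonneg (by linarith : (0:ℚ) ≤ (n:ℚ)-2) (by linarith : (0:ℚ) ≤ (m:ℚ)-2)]
  have hn0 : (n:ℚ) ≠ 0 := Nat.cast_ne_zero.2 (by omega)
  have hm0 : (m:ℚ) ≠ 0 := Nat.cast_ne_zero.2 (by omega)
  have hD : 1 - 1/(n:ℚ) - 1/(m:ℚ) = ((n:ℚ)*m - n - m)/((n:ℚ)*m) := by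
    field_simp; ring
  have hlam : lam = (k : ℚ) / ((n:ℚ)*m - n - m) := by
    rw [hbig, hD]
    have hc : ((2*n*m : ℕ) : ℚ) = 2 * ((n:ℚ)*m) := by push_cast; ring
    rw [hc]
    have hA' : (n:ℚ)*m - n - m ≠ 0 := ne_of_gt hA
    field_simp
  constructor
  · rw [hlam]
    apply div_pos _ hA
    exact_mod_cast hk1
  · obtain ⟨c, hc⟩ := hdk
    refine ⟨c, ?_⟩
    rw [hlam, hc]
    push_cast
    ring
end
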